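/- Let K be a field, V a finite-dimensional K-vector space, and F₁, F₂ two ℤ-filtrations on V. Let Gr_{F₁} V = ⊕_{i∈ℤ} F₁^{≥i}/F₁^{≥i+1}, and let Gr_{F₁}(F₂) be the filtration induced by F₂ on Gr_{F₁} V, given on each graded piece F₁^{≥i}/F₁^{≥i+1} by the images of the subspaces F₂^{≥j} ∩ F₁^{≥i}. Then t(F₂) ≤ t(Gr_{F₁}(F₂)) in the dominance order on decreasing integer tuples of length dim_K V. -/

import Mathlib

open Finset Module

/-- Partial sum of the first `k` entries of a tuple indexed by `Fin n`. -/
def partialSumZ {n : ℕ} (t : Fin n → ℤ) (k : ℕ) : ℤ :=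
  ∑ j ∈ Finset.univ.filter (fun j : Fin n => (j : ℕ) < k), t j

/-- The number of entries of the tuple `t` equal to `z` (the multiplicity of `z` in `t`). -/
def tupleCount {n : ℕ} (t : Fin n → ℤ) (z : ℤ) : ℕ :=
  (Finset.univ.filter (fun j : Fin n => t j = z)).card


/-- Number of entries of `t` that are `≥ z`. -/
def cgeqZ {n : ℕ} (t : Fin n → ℤ) (z : ℤ) : ℕ :=
  (Finset.univ.filter (fun j : Fin n => z ≤ t j)).card

lemma cgeqZ_antichar {n : ℕ} {t : Fin n → ℤ} (ht : Antitone t) (z : ℤ) (j : Fin n) :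
    z ≤ t j ↔ (j : ℕ) < cgeqZ t z := by
  constructor
  · intro h
    have hsub : Finset.Iic j ⊆ Finset.univ.filter (fun k : Fin n => z ≤ t k) := by
      intro k hk
      simp only [Finset.mem_Iic] at hk
      simp only [Finset.mem_filter, Finset.mem_univ, true_and]
      exact le_trans h (ht hk)
    have := Finset.card_le_card hsub
    rw [Fin.card_Iic] at this
    unfold cgeqZ
    omega
  · intro h
    by_contra hc
    push_neg at hc
    have hsub : Finset.univ.filter (fun k : Fin n => z ≤ t k) ⊆ Finset.Iio j := by
      intro k hk
      simp only [Finset.mem_filter, Finset.mem_univ, true_and] at hk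
      simp only [Finset.mem_Iio]
      by_contra hk2
      push_neg at hk2
      exact absurd (le_trans hk (ht hk2)) (not_le.mpr hc)
    have := Finset.card_le_card hsub
    rw [Fin.card_Iio] at this
    unfold cgeqZ at h
    omega

lemma cgeqZ_step {n : ℕ} (t : Fin n → ℤ) (z : ℤ) :
    cgeqZ t z = tupleCount t z + cgeqZ t (z + 1) := by
  unfold cgeqZ tupleCount
  rw [← Finset.card_union_of_disjoint]
  · congr 1
    ext k
    simp only [Finset.mem_union, Finset.mem_filter, Finset.mem_univ, true_and]
    omega
  · rw [Finset.disjoint_filter]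
    intro k _ hk
    omega

lemma antitone_eq_of_counts {n : ℕ} {t g : Fin n → ℤ} (ht : Antitone t) (hg : Antitone g)
    (h : ∀ z, tupleCount t z = tupleCount g z) : t = g := by
  -- bound
  set Z : ℤ := ((Finset.univ.sup fun j : Fin n => (max (t j) (g j)).toNat : ℕ) : ℤ) + 1 with hZ
  have hbt : ∀ j : Fin n, t j < Z := by
    intro j
    have h1 : t j ≤ ((max (t j) (g j)).toNat : ℤ) := le_trans (le_max_left _ _) (Int.self_le_toNat _)
    have h2 : ((max (t j) (g j)).toNat : ℕ) ≤ Finset.univ.sup fun j : Fin n => (max (t j) (g j)).toNat :=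
      Finset.le_sup (f := fun j : Fin n => (max (t j) (g j)).toNat) (Finset.mem_univ j)
    omega
  have hbg : ∀ j : Fin n, g j < Z := by
    intro j
    have h1 : g j ≤ ((max (t j) (g j)).toNat : ℤ) := le_trans (le_max_right _ _) (Int.self_le_toNat _)
    have h2 : ((max (t j) (g j)).toNat : ℕ) ≤ Finset.univ.sup fun j : Fin n => (max (t j) (g j)).toNat :=
      Finset.le_sup (f := fun j : Fin n => (max (t j) (g j)).toNat) (Finset.mem_univ j)
    omega
  have hzero : ∀ z, Z ≤ z → cgeqZ t z = 0 ∧ cgeqZ g z = 0 := by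
    intro z hz
    constructor <;>
    · unfold cgeqZ
      rw [Finset.card_eq_zero, Finset.filter_eq_empty_iff]
      intro j _
      first
      | exact not_le.mpr (lt_of_lt_of_le (hbt j) hz)
      | exact not_le.mpr (lt_of_lt_of_le (hbg j) hz)
  have key : ∀ m : ℕ, ∀ z : ℤ, Z - z ≤ m → cgeqZ t z = cgeqZ g z := by
    intro m
    induction m with
    | zero =>
      intro z hz
      obtain ⟨h1, h2⟩ := hzero z (by omega)
      omega
    | succ m ih =>
      intro z hz
      by_cases hc : Z ≤ z
      · obtain ⟨h1, h2⟩ := hzero z hc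
        omega
      · rw [cgeqZ_step t z, cgeqZ_step g z, h z, ih (z + 1) (by omega)]
  have hcg : ∀ z, cgeqZ t z = cgeqZ g z := by
    intro z
    exact key (Z - z).toNat z (by omega)
  funext j
  refine le_antisymm ?_ ?_
  · have := (cgeqZ_antichar ht (t j) j).mp le_rfl
    rw [hcg] at this
    exact (cgeqZ_antichar hg (t j) j).mpr this
  · have := (cgeqZ_antichar hg (g j) j).mp le_rfl
    rw [← hcg] at this
    exact (cgeqZ_antichar ht (g j) j).mpr this

lemma telescope_Icc (f : ℤ → ℤ) (a b : ℤ) (hab : a ≤ b) :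
    ∑ i ∈ Finset.Icc a b, (f i - f (i + 1)) = f a - f (b + 1) := by
  refine Int.le_induction (motive := fun b _ => ∑ i ∈ Finset.Icc a b, (f i - f (i + 1)) = f a - f (b + 1)) ?_ ?_ b hab
  · simp
  · intro b hb ih
    have h : Finset.Icc a (b + 1) = insert (b + 1) (Finset.Icc a b) := by
      ext x; simp only [Finset.mem_Icc, Finset.mem_insert]; omega
    rw [h, Finset.sum_insert (by simp), ih]
    ring

/-- For two ℤ-filtrations `F₁`, `F₂` on a finite-dimensional `K`-vector space `V`,
the type of `F₂` is dominated by the type of the filtration induced by `F₂` on the graded space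
`Gr_{F₁} V`: `t(F₂) ≤ t(Gr_{F₁}(F₂))`. The type of `Gr_{F₁}(F₂)` is encoded as a decreasing
tuple `g` in which each `z ∈ ℤ` occurs with multiplicity
`∑ᵢ dim ( image of F₂^{≥z} ∩ F₁^{≥i} in F₁^{≥i}/F₁^{≥i+1} graded piece )`. -/
theorem type_le_type_graded {K V : Type*} [Field K] [AddCommGroup V] [Module K V]
    [FiniteDimensional K V]
    (F₁ F₂ : ℤ → Submodule K V) (hF₁ : Antitone F₁) (hF₂ : Antitone F₂)
    (a b : ℤ) (hab : a ≤ b)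
    (hF₁top : ∀ i ≤ a, F₁ i = ⊤) (hF₁bot : ∀ i, b ≤ i → F₁ i = ⊥)
    (hF₂top : ∃ N : ℤ, ∀ i ≤ N, F₂ i = ⊤) (hF₂bot : ∃ N : ℤ, ∀ i, N ≤ i → F₂ i = ⊥)
    (t₂ : Fin (finrank K V) → ℤ) (ht₂ : Antitone t₂)
    (ht₂c : ∀ z : ℤ, tupleCount t₂ z = finrank K ↥(F₂ z) - finrank K ↥(F₂ (z + 1)))
    (g : Fin (finrank K V) → ℤ) (hg : Antitone g)
    (hgc : ∀ z : ℤ, tupleCount g z = ∑ i ∈ Finset.Icc a b,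
      (finrank K ↥(F₂ z ⊓ F₁ i ⊔ F₁ (i + 1)) - finrank K ↥(F₂ (z + 1) ⊓ F₁ i ⊔ F₁ (i + 1)))) :
    (∀ k : ℕ, k ≤ finrank K V → partialSumZ t₂ k ≤ partialSumZ g k) ∧
      partialSumZ t₂ (finrank K V) = partialSumZ g (finrank K V) := by
  have hmono2 : ∀ z : ℤ, F₂ (z + 1) ≤ F₂ z := fun z => hF₂ (by omega)
  have hcounts : ∀ z : ℤ, tupleCount t₂ z = tupleCount g z := by
    intro z
    -- second isomorphism theorem identity, in ℤ
    have hr : ∀ (w i : ℤ), (finrank K ↥(F₂ w ⊓ F₁ i ⊔ F₁ (i + 1)) : ℤ)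
        = (finrank K ↥(F₂ w ⊓ F₁ i) : ℤ) + (finrank K ↥(F₁ (i + 1)) : ℤ)
          - (finrank K ↥(F₂ w ⊓ F₁ (i + 1)) : ℤ) := by
      intro w i
      have h2 : F₂ w ⊓ F₁ i ⊓ F₁ (i + 1) = F₂ w ⊓ F₁ (i + 1) := by
        rw [inf_assoc, inf_eq_right.mpr (hF₁ (by omega : i ≤ i + 1))]
      have h1 := Submodule.finrank_sup_add_finrank_inf_eq (F₂ w ⊓ F₁ i) (F₁ (i + 1))
      rw [h2] at h1
      omega
    have hgz : (tupleCount g z : ℤ) = ∑ i ∈ Finset.Icc a b,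
        (((finrank K ↥(F₂ z ⊓ F₁ i) : ℤ) - (finrank K ↥(F₂ (z + 1) ⊓ F₁ i) : ℤ))
          - ((finrank K ↥(F₂ z ⊓ F₁ (i + 1)) : ℤ)
            - (finrank K ↥(F₂ (z + 1) ⊓ F₁ (i + 1)) : ℤ))) := by
      rw [hgc z, Nat.cast_sum]
      refine Finset.sum_congr rfl (fun i _ => ?_)
      rw [Nat.cast_sub (Submodule.finrank_mono
        (sup_le_sup_right (inf_le_inf_right _ (hmono2 z)) _))]
      rw [hr z i, hr (z + 1) i]
      ring
    rw [telescope_Icc (fun i => (finrank K ↥(F₂ z ⊓ F₁ i) : ℤ)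
      - (finrank K ↥(F₂ (z + 1) ⊓ F₁ i) : ℤ)) a b hab] at hgz
    rw [hF₁top a le_rfl, hF₁bot (b + 1) (by omega)] at hgz
    rw [inf_top_eq, inf_top_eq, inf_bot_eq, inf_bot_eq, finrank_bot] at hgz
    have htz : (tupleCount t₂ z : ℤ)
        = (finrank K ↥(F₂ z) : ℤ) - (finrank K ↥(F₂ (z + 1)) : ℤ) := by
      rw [ht₂c z, Nat.cast_sub (Submodule.finrank_mono (hmono2 z))]
    omega
  have heq : t₂ = g := antitone_eq_of_counts ht₂ hg hcounts
  rw [heq]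
  exact ⟨fun k _ => le_rfl, rfl⟩
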